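/- arXiv:2107.03160 — 2 statements merged into one kernel-verified Lean document; each statement's English description precedes it below -/
import Mathlib

section
/- Let 𝒜 be an essentially small abelian category linear over a finite field 𝔽_q with finite Hom and Ext¹ spaces. For objects X, Y, Z of 𝒜, the Hall number F_{XY}^Z = |{L ⊆ Z : L ≅ Y, Z/L ≅ X}| satisfies the Riedtmann–Peng formula F_{XY}^Z = (|Ext¹(X,Y)_Z| / |Hom(X,Y)|) · (|Aut(Z)| / (|Aut(X)| |Aut(Y)|)), where Ext¹(X,Y)_Z ⊆ Ext¹(X,Y) is the subset of extension classes with middle term isomorphic to Z. -/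
open CategoryTheory Limits

universe v u

variable {A : Type u} [Category.{v} A] [Abelian A]

/-- A representative of a class in `Ext¹(X,Y)`: a short exact sequence `0 → Y → E → X → 0`. -/
structure ExtRep (A : Type u) [Category.{v} A] [Abelian A] (X Y : A) where
  E : A
  ι : Y ⟶ E
  π : E ⟶ X
  w : ι ≫ π = 0
  ex : (ShortComplex.mk ι π w).ShortExact

/-- Equivalence of short exact sequences: isomorphism of middle terms commuting with the
structure maps. -/
def extRepSetoid (A : Type u) [Category.{v} A] [Abelian A] (X Y : A) :
    Setoid (ExtRep A X Y) where
  r s t := ∃ e : s.E ≅ t.E, s.ι ≫ e.hom = t.ι ∧ e.hom ≫ t.π = s.π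
  iseqv := by
    constructor
    · intro s; exact ⟨Iso.refl _, by simp, by simp⟩
    · rintro s t ⟨e, h1, h2⟩
      exact ⟨e.symm, by rw [← h1]; simp, by rw [← h2]; simp⟩
    · rintro s t u ⟨e, h1, h2⟩ ⟨f, h3, h4⟩
      exact ⟨e.trans f, by simp [← h3, ← h1], by simp [← h2, ← h4]⟩

/-- The set `Ext¹(X,Y)_Z` of classes of short exact sequences `0 → Y → E → X → 0`
with middle term `E ≅ Z`. -/
def ExtWithMiddle (X Y Z : A) : Type _ :=
  Quotient (Setoid.comap (Subtype.val : {s : ExtRep A X Y // Nonempty (s.E ≅ Z)} → _)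
    (extRepSetoid A X Y))

/-- The Hall number `F_{XY}^Z = |{L ⊆ Z : L ≅ Y, Z/L ≅ X}|`. -/
noncomputable def hallNumber (X Y Z : A) : ℕ :=
  Nat.card {L : Subobject Z // Nonempty ((L : A) ≅ Y) ∧ Nonempty (cokernel L.arrow ≅ X)}

set_option linter.unusedSectionVars false

/-- `(ι, π)` is a short exact sequence. -/
def IsSES {Y E X : A} (ι : Y ⟶ E) (π : E ⟶ X) : Prop :=
  ∃ w : ι ≫ π = 0, (ShortComplex.mk ι π w).ShortExact

lemma IsSES.transport {Y E X Y' E' X' : A} {ι : Y ⟶ E} {π : E ⟶ X} (h : IsSES ι π)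
    (a : Y' ≅ Y) (e : E ≅ E') (b : X ≅ X') :
    IsSES (a.hom ≫ ι ≫ e.hom) (e.inv ≫ π ≫ b.hom) := by
  obtain ⟨w, hw⟩ := h
  refine ⟨by simp [reassoc_of% w], ?_⟩
  exact ShortComplex.shortExact_of_iso
    (ShortComplex.isoMk a.symm e b (by simp) (by simp)) hw

lemma IsSES.mono {Y E X : A} {ι : Y ⟶ E} {π : E ⟶ X} (h : IsSES ι π) : Mono ι :=
  h.choose_spec.mono_f

lemma IsSES.epi {Y E X : A} {ι : Y ⟶ E} {π : E ⟶ X} (h : IsSES ι π) : Epi π :=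
  h.choose_spec.epi_g

lemma IsSES.w {Y E X : A} {ι : Y ⟶ E} {π : E ⟶ X} (h : IsSES ι π) : ι ≫ π = 0 :=
  h.choose

/-- `π` is a cokernel of `ι`. -/
noncomputable def IsSES.gIsCokernel {Y E X : A} {ι : Y ⟶ E} {π : E ⟶ X} (h : IsSES ι π) :
    IsColimit (CokernelCofork.ofπ π h.w) := by
  have := h.epi
  exact (h.choose_spec.exact).gIsCokernel

/-- `ι` is a kernel of `π`. -/
noncomputable def IsSES.fIsKernel {Y E X : A} {ι : Y ⟶ E} {π : E ⟶ X} (h : IsSES ι π) :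
    IsLimit (KernelFork.ofι ι h.w) := by
  have := h.mono
  exact (h.choose_spec.exact).fIsKernel

/-- The set of short exact sequences `0 → Y → Z → X → 0` with fixed middle term `Z`. -/
def SES (X Y Z : A) : Type _ :=
  {p : (Y ⟶ Z) × (Z ⟶ X) // IsSES p.1 p.2}

lemma SES.finite (X Y Z : A) (hfin : ∀ M N : A, Finite (M ⟶ N)) : Finite (SES X Y Z) := by
  have := hfin Y Z; have := hfin Z X
  exact Subtype.finite

lemma aut_finite (M : A) (hfin : ∀ M N : A, Finite (M ⟶ N)) : Finite (Aut M) := by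
  have := hfin M M
  exact Finite.of_injective (fun g : Aut M => (g.hom, g.inv))
    (fun g h hg => by simp only [Prod.mk.injEq] at hg; exact Aut.ext hg.1)

set_option linter.unusedSectionVars false

variable {X Y Z : A}

noncomputable instance : MulAction (Aut Z) (SES X Y Z) where
  smul g p := ⟨(p.1.1 ≫ g.hom, g.inv ≫ p.1.2), by
    simpa using p.2.transport (Iso.refl Y) (g : Z ≅ Z) (Iso.refl X)⟩
  one_smul p := by
    apply Subtype.ext
    show (p.1.1 ≫ (1 : Aut Z).hom, (1 : Aut Z).inv ≫ p.1.2) = p.1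
    have h1 : (1 : Aut Z) = Iso.refl Z := rfl
    simp [h1]
  mul_smul g h p := by
    apply Subtype.ext
    show (p.1.1 ≫ (g * h).hom, (g * h).inv ≫ p.1.2)
      = ((p.1.1 ≫ h.hom) ≫ g.hom, g.inv ≫ h.inv ≫ p.1.2)
    simp [Aut.Aut_mul_def]
    exact ⟨rfl, Category.assoc _ _ _⟩

lemma SES.smul_def (g : Aut Z) (p : SES X Y Z) :
    (g • p).1 = (p.1.1 ≫ g.hom, g.inv ≫ p.1.2) := rfl

lemma SES.mem_stabilizer_iff {g : Aut Z} {p : SES X Y Z} :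
    g ∈ MulAction.stabilizer (Aut Z) p ↔ p.1.1 ≫ g.hom = p.1.1 ∧ g.inv ≫ p.1.2 = p.1.2 := by
  rw [MulAction.mem_stabilizer_iff]
  constructor
  · intro h
    have := congrArg Subtype.val h
    rw [SES.smul_def] at this
    exact ⟨congrArg Prod.fst this, congrArg Prod.snd this⟩
  · rintro ⟨h1, h2⟩
    apply Subtype.ext
    rw [SES.smul_def]
    exact Prod.ext h1 h2

lemma autZ_of_hom (p : SES X Y Z) (h : X ⟶ Y) :
    IsIso (𝟙 Z + p.1.2 ≫ h ≫ p.1.1) := by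
  have hw := p.2.w
  refine ⟨𝟙 Z - p.1.2 ≫ h ≫ p.1.1, ?_, ?_⟩ <;>
    simp [Preadditive.comp_add, Preadditive.add_comp, Preadditive.comp_sub,
      Preadditive.sub_comp, reassoc_of% hw]

/-- The map `Hom(X,Y) → stabilizer`. -/
noncomputable def homToStab (p : SES X Y Z) (h : X ⟶ Y) :
    MulAction.stabilizer (Aut Z) p := by
  have := autZ_of_hom p h
  refine ⟨asIso (𝟙 Z + p.1.2 ≫ h ≫ p.1.1), ?_⟩
  have hw := p.2.w
  apply SES.mem_stabilizer_iff.2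
  constructor
  · simp [Preadditive.comp_add, reassoc_of% hw]
  · rw [← cancel_epi (asIso (𝟙 Z + p.1.2 ≫ h ≫ p.1.1)).hom]
    rw [Iso.hom_inv_id_assoc]
    simp [asIso, Preadditive.add_comp, Category.assoc, hw]

lemma homToStab_hom (p : SES X Y Z) (h : X ⟶ Y) :
    ((homToStab p h : Aut Z) : Z ≅ Z).hom = 𝟙 Z + p.1.2 ≫ h ≫ p.1.1 := rfl

/-- The stabilizer of a short exact sequence under the `Aut Z` action is in bijection
with `Hom(X, Y)`. -/
noncomputable def stabEquivHom (p : SES X Y Z) :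
    MulAction.stabilizer (Aut Z) p ≃ (X ⟶ Y) := by
  have hmono := p.2.mono
  have hepi := p.2.epi
  have hw := p.2.w
  refine (Equiv.ofBijective (homToStab p) ⟨?_, ?_⟩).symm
  · intro h₁ h₂ hh
    have := congrArg (fun g => (Subtype.val g).hom) hh
    simp only [homToStab_hom] at this
    have : p.1.2 ≫ h₁ ≫ p.1.1 = p.1.2 ≫ h₂ ≫ p.1.1 := by
      have := congrArg (fun g => (Subtype.val g).hom) hh
      simpa [homToStab_hom] using this
    rwa [cancel_epi p.1.2, cancel_mono p.1.1] at this
  · rintro ⟨g, hg⟩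
    rw [SES.mem_stabilizer_iff] at hg
    obtain ⟨hι, hπ⟩ := hg
    have hπ' : g.hom ≫ p.1.2 = p.1.2 := by
      calc g.hom ≫ p.1.2 = g.hom ≫ g.inv ≫ p.1.2 := by rw [hπ]
      _ = p.1.2 := Iso.hom_inv_id_assoc (g : Z ≅ Z) _
    have hu : p.1.1 ≫ (g.hom - 𝟙 Z) = 0 ≫ (g.hom - 𝟙 Z) := by
      simp [Preadditive.comp_sub, hι]
    set k : X ⟶ Z := (Cofork.IsColimit.desc p.2.gIsCokernel (g.hom - 𝟙 Z) hu) with hk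
    have hk' : p.1.2 ≫ k = g.hom - 𝟙 Z := Cofork.IsColimit.π_desc' p.2.gIsCokernel _ _
    have hkπ : k ≫ p.1.2 = k ≫ 0 := by
      rw [comp_zero, ← cancel_epi p.1.2, reassoc_of% hk']
      simp [Preadditive.sub_comp, hπ']
    set h : X ⟶ Y := Fork.IsLimit.lift p.2.fIsKernel k hkπ with hh
    have hh' : h ≫ p.1.1 = k := Fork.IsLimit.lift_ι' p.2.fIsKernel _ _
    refine ⟨h, ?_⟩
    apply Subtype.ext
    apply Aut.ext
    rw [homToStab_hom]
    show 𝟙 Z + p.1.2 ≫ h ≫ p.1.1 = g.hom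
    rw [hh', hk']
    abel

/-- Map from short exact sequences with middle term `Z` to `Ext¹(X,Y)_Z`. -/
def sesToExt (p : SES X Y Z) : ExtWithMiddle X Y Z :=
  Quotient.mk _ ⟨⟨Z, p.1.1, p.1.2, p.2.w, by
      have := p.2.choose_spec; convert this⟩, ⟨Iso.refl Z⟩⟩

lemma sesToExt_eq_iff (p q : SES X Y Z) :
    sesToExt p = sesToExt q ↔
      ∃ e : Z ≅ Z, p.1.1 ≫ e.hom = q.1.1 ∧ e.hom ≫ q.1.2 = p.1.2 := by
  constructor
  · intro h
    exact Quotient.exact h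
  · intro h
    exact Quotient.sound h

lemma sesToExt_surjective : Function.Surjective (sesToExt (X := X) (Y := Y) (Z := Z)) := by
  rintro ⟨⟨s, ⟨e⟩⟩⟩
  have hs : IsSES s.ι s.π := ⟨s.w, s.ex⟩
  refine ⟨⟨(s.ι ≫ e.hom, e.inv ≫ s.π), by
    simpa using hs.transport (Iso.refl Y) e (Iso.refl X)⟩, ?_⟩
  apply Quotient.sound
  exact ⟨e.symm, by simp, by simp⟩

lemma sesToExt_orbitRel (p q : SES X Y Z) :
    sesToExt p = sesToExt q ↔ MulAction.orbitRel (Aut Z) (SES X Y Z) p q := by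
  rw [sesToExt_eq_iff]
  constructor
  · rintro ⟨e, h1, h2⟩
    refine ⟨e.symm, ?_⟩
    apply Subtype.ext
    refine (SES.smul_def (e.symm : Aut Z) q).trans ?_
    refine Prod.ext ?_ ?_
    · show q.1.1 ≫ e.inv = p.1.1
      rw [← h1]; simp
    · show e.hom ≫ q.1.2 = p.1.2
      exact h2
  · rintro ⟨g, hg⟩
    have := congrArg Subtype.val hg
    rw [SES.smul_def] at this
    refine ⟨(g : Z ≅ Z).symm, ?_, ?_⟩
    · show p.1.1 ≫ g.inv = q.1.1
      rw [← congrArg Prod.fst this]; simp [Iso.hom_inv_id (g : Z ≅ Z)]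
    · show g.inv ≫ q.1.2 = p.1.2
      exact congrArg Prod.snd this

/-- `Ext¹(X,Y)_Z` is in bijection with the orbits of `Aut Z` on short exact sequences. -/
noncomputable def extEquivOrbits (X Y Z : A) :
    Quotient (MulAction.orbitRel (Aut Z) (SES X Y Z)) ≃ ExtWithMiddle X Y Z := by
  refine Equiv.ofBijective (Quotient.lift sesToExt ?_) ⟨?_, ?_⟩
  · intro p q h
    exact (sesToExt_orbitRel p q).2 h
  · rintro ⟨p⟩ ⟨q⟩ h
    exact Quotient.sound ((sesToExt_orbitRel p q).1 h)
  · intro x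
    obtain ⟨p, hp⟩ := sesToExt_surjective x
    exact ⟨Quotient.mk _ p, hp⟩

/-- The subobjects appearing in the Hall number. -/
def HallSub (X Y Z : A) : Type _ :=
  {L : Subobject Z // Nonempty ((L : A) ≅ Y) ∧ Nonempty (cokernel L.arrow ≅ X)}

/-- The cokernel of `ι` is isomorphic to `X`, for a short exact sequence. -/
noncomputable def IsSES.cokernelIso {ι : Y ⟶ Z} {π : Z ⟶ X} (h : IsSES ι π) :
    cokernel ι ≅ X :=
  IsColimit.coconePointUniqueUpToIso (cokernelIsCokernel ι) h.gIsCokernel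

/-- The map sending a short exact sequence to its image subobject. -/
noncomputable def sesToSub (p : SES X Y Z) : HallSub X Y Z := by
  have := p.2.mono
  refine ⟨Subobject.mk p.1.1, ⟨Subobject.underlyingIso p.1.1⟩, ⟨?_⟩⟩
  refine (cokernel.mapIso _ _ (Subobject.underlyingIso p.1.1) (Iso.refl Z) ?_).trans
    p.2.cokernelIso
  simp

lemma sesToSub_val (p : SES X Y Z) :
    letI := p.2.mono
    (sesToSub p).1 = Subobject.mk p.1.1 := rfl

lemma sesToSub_surjective : Function.Surjective (sesToSub (X := X) (Y := Y) (Z := Z)) := by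
  rintro ⟨L, ⟨e⟩, ⟨f⟩⟩
  have harrow : IsSES L.arrow (cokernel.π L.arrow) :=
    ⟨cokernel.condition _, ShortComplex.ShortExact.mk'
      (ShortComplex.exact_of_g_is_cokernel _ (cokernelIsCokernel L.arrow))
      inferInstance inferInstance⟩
  have h : IsSES (e.symm.hom ≫ L.arrow ≫ (Iso.refl Z).hom)
      ((Iso.refl Z).inv ≫ cokernel.π L.arrow ≫ f.hom) :=
    harrow.transport e.symm (Iso.refl Z) f
  refine ⟨⟨(e.inv ≫ L.arrow, cokernel.π L.arrow ≫ f.hom), by simpa using h⟩, ?_⟩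
  apply Subtype.ext
  refine (sesToSub_val _).trans ?_
  show Subobject.mk (e.inv ≫ L.arrow) = L
  have : Mono (e.inv ≫ L.arrow) := mono_comp _ _
  exact Subobject.mk_eq_of_comm _ e.symm (by simp)

/-- The section of `sesToSub`. -/
noncomputable def subToSes (L : HallSub X Y Z) : SES X Y Z :=
  Function.surjInv sesToSub_surjective L

lemma sesToSub_subToSes (L : HallSub X Y Z) : sesToSub (subToSes L) = L :=
  Function.surjInv_eq sesToSub_surjective L

/-- The fibers of `sesToSub` are torsors under `Aut Y × Aut X`. -/
noncomputable def hallEquiv (X Y Z : A) :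
    (HallSub X Y Z) × Aut Y × Aut X ≃ SES X Y Z := by
  classical
  refine Equiv.ofBijective (fun t =>
    ⟨(t.2.1.hom ≫ (subToSes t.1).1.1, (subToSes t.1).1.2 ≫ t.2.2.hom), by
      simpa using (subToSes t.1).2.transport t.2.1 (Iso.refl Z) t.2.2⟩) ⟨?_, ?_⟩
  · -- injectivity
    rintro ⟨L, a, b⟩ ⟨L', a', b'⟩ h
    have h' := congrArg Subtype.val h
    have h1 := congrArg Prod.fst h'
    have h2 := congrArg Prod.snd h'
    simp only at h1 h2
    -- first, the subobjects agree
    have hmk : L = L' := by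
      have e1 : sesToSub (⟨(a.hom ≫ (subToSes L).1.1, (subToSes L).1.2 ≫ b.hom), by
          simpa using (subToSes L).2.transport a (Iso.refl Z) b⟩ : SES X Y Z) = L := by
        apply Subtype.ext
        refine (sesToSub_val _).trans ?_
        have hm := (subToSes L).2.mono
        have : (sesToSub (subToSes L)).1 = L.1 := congrArg Subtype.val (sesToSub_subToSes L)
        rw [sesToSub_val] at this
        rw [← this]
        haveI : Mono ((a : Y ≅ Y).hom ≫ (subToSes L).1.1) := by
          let c : Y ≅ Y := a; exact (inferInstance : Mono (c.hom ≫ (subToSes L).1.1))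
        show Subobject.mk ((a : Y ≅ Y).hom ≫ (subToSes L).1.1) = _
        exact Subobject.mk_eq_mk_of_comm _ _ a rfl
      have e2 : sesToSub (⟨(a'.hom ≫ (subToSes L').1.1, (subToSes L').1.2 ≫ b'.hom), by
          simpa using (subToSes L').2.transport a' (Iso.refl Z) b'⟩ : SES X Y Z) = L' := by
        apply Subtype.ext
        refine (sesToSub_val _).trans ?_
        have hm := (subToSes L').2.mono
        have : (sesToSub (subToSes L')).1 = L'.1 := congrArg Subtype.val (sesToSub_subToSes L')
        rw [sesToSub_val] at this
        rw [← this]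
        haveI : Mono ((a' : Y ≅ Y).hom ≫ (subToSes L').1.1) := by
          let c : Y ≅ Y := a'; exact (inferInstance : Mono (c.hom ≫ (subToSes L').1.1))
        show Subobject.mk ((a' : Y ≅ Y).hom ≫ (subToSes L').1.1) = _
        exact Subobject.mk_eq_mk_of_comm _ _ a' rfl
      rw [← e1, ← e2]
      exact congrArg sesToSub h
    subst hmk
    have hm := (subToSes L).2.mono
    have he := (subToSes L).2.epi
    have ha : a = a' := by
      apply Aut.ext
      rwa [← cancel_mono (subToSes L).1.1]
    have hb : b = b' := by
      apply Aut.ext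
      rwa [← cancel_epi (subToSes L).1.2]
    rw [ha, hb]
  · -- surjectivity
    intro p
    have hm := p.2.mono
    have hm₀ := (subToSes (sesToSub p)).2.mono
    have hmk : Subobject.mk p.1.1 = Subobject.mk (subToSes (sesToSub p)).1.1 := by
      have h2 := congrArg Subtype.val (sesToSub_subToSes (sesToSub p))
      rw [sesToSub_val, sesToSub_val] at h2
      exact h2.symm
    set a : Y ≅ Y := Subobject.isoOfMkEqMk _ _ hmk with ha
    have haι : a.hom ≫ (subToSes (sesToSub p)).1.1 = p.1.1 := Subobject.ofMkLEMk_comp hmk.le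
    have hcc : IsColimit (CokernelCofork.ofπ (subToSes (sesToSub p)).1.2
        (show p.1.1 ≫ (subToSes (sesToSub p)).1.2 = 0 by
          rw [← haι, Category.assoc, (subToSes (sesToSub p)).2.w, comp_zero]) :
          CokernelCofork p.1.1) :=
      isCokernelEpiComp (subToSes (sesToSub p)).2.gIsCokernel a.hom haι.symm
    set b : X ≅ X := IsColimit.coconePointUniqueUpToIso hcc p.2.gIsCokernel with hb
    have hbπ : (subToSes (sesToSub p)).1.2 ≫ b.hom = p.1.2 := by
      have := IsColimit.comp_coconePointUniqueUpToIso_hom hcc p.2.gIsCokernel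
        WalkingParallelPair.one
      simpa using this
    refine ⟨⟨sesToSub p, a, b⟩, ?_⟩
    apply Subtype.ext
    exact Prod.ext haι hbπ

lemma card_ses (X Y Z : A) :
    Nat.card (SES X Y Z)
      = hallNumber X Y Z * (Nat.card (Aut Y) * Nat.card (Aut X)) := by
  rw [← Nat.card_congr (hallEquiv X Y Z), Nat.card_prod, Nat.card_prod]
  rfl

lemma card_ses_mul (hfin : ∀ M N : A, Finite (M ⟶ N)) (X Y Z : A) :
    Nat.card (SES X Y Z) * Nat.card (X ⟶ Y)
      = Nat.card (ExtWithMiddle X Y Z) * Nat.card (Aut Z) := by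
  classical
  haveI : Finite (SES X Y Z) := SES.finite _ _ _ hfin
  haveI : Finite (Aut Z) := aut_finite _ hfin
  haveI : Finite (X ⟶ Y) := hfin X Y
  letI : Fintype (SES X Y Z) := Fintype.ofFinite _
  letI : Fintype (Aut Z) := Fintype.ofFinite _
  letI : Fintype (Quotient (MulAction.orbitRel (Aut Z) (SES X Y Z))) := Fintype.ofFinite _
  letI : ∀ ω : Quotient (MulAction.orbitRel (Aut Z) (SES X Y Z)),
      Fintype (Aut Z ⧸ MulAction.stabilizer (Aut Z) (Quotient.out ω)) :=
    fun ω => Fintype.ofFinite _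
  rw [← Nat.card_congr (extEquivOrbits X Y Z)]
  have key : ∀ ω : Quotient (MulAction.orbitRel (Aut Z) (SES X Y Z)),
      Nat.card (Aut Z ⧸ MulAction.stabilizer (Aut Z) (Quotient.out ω)) * Nat.card (X ⟶ Y)
        = Nat.card (Aut Z) := by
    intro ω
    rw [← Nat.card_congr (stabEquivHom (Quotient.out ω))]
    exact (Subgroup.card_eq_card_quotient_mul_card_subgroup _).symm
  have hβ : Nat.card (SES X Y Z)
      = ∑ ω : Quotient (MulAction.orbitRel (Aut Z) (SES X Y Z)),
          Nat.card (Aut Z ⧸ MulAction.stabilizer (Aut Z) (Quotient.out ω)) := by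
    rw [Nat.card_congr (MulAction.selfEquivSigmaOrbitsQuotientStabilizer (Aut Z) (SES X Y Z))]
    rw [Nat.card_eq_fintype_card, Fintype.card_sigma]
    simp [Nat.card_eq_fintype_card]
  rw [hβ, Finset.sum_mul]
  have : ∀ ω ∈ Finset.univ, Nat.card (Aut Z ⧸ MulAction.stabilizer (Aut Z)
      ((Quotient.out ω : SES X Y Z))) * Nat.card (X ⟶ Y) = Nat.card (Aut Z) :=
    fun ω _ => key ω
  rw [Finset.sum_congr rfl this, Finset.sum_const, Finset.card_univ, smul_eq_mul,
    Nat.card_eq_fintype_card, Nat.card_eq_fintype_card]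

/-- The Riedtmann–Peng formula: for an `𝔽_q`-linear abelian category with finite Hom spaces,
`F_{XY}^Z = (|Ext¹(X,Y)_Z| / |Hom(X,Y)|) · (|Aut Z| / (|Aut X| |Aut Y|))`. -/
theorem stmt7 (Fq : Type*) [Field Fq] [Finite Fq] [Linear Fq A]
    (hfin : ∀ X Y : A, Finite (X ⟶ Y)) (X Y Z : A) :
    (hallNumber X Y Z : ℚ)
      = ((Nat.card (ExtWithMiddle X Y Z) : ℚ) / (Nat.card (X ⟶ Y) : ℚ)) *
        ((Nat.card (Aut Z) : ℚ) / ((Nat.card (Aut X) : ℚ) * (Nat.card (Aut Y) : ℚ))) := by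
  classical
  have hses := card_ses X Y Z
  have hmul := card_ses_mul hfin X Y Z
  haveI : Finite (X ⟶ Y) := hfin X Y
  haveI : Finite (Aut X) := aut_finite _ hfin
  haveI : Finite (Aut Y) := aut_finite _ hfin
  haveI : Nonempty (X ⟶ Y) := ⟨0⟩
  have hH : 0 < (Nat.card (X ⟶ Y) : ℚ) := by exact_mod_cast Nat.card_pos
  have haX : 0 < (Nat.card (Aut X) : ℚ) := by exact_mod_cast Nat.card_pos
  have haY : 0 < (Nat.card (Aut Y) : ℚ) := by exact_mod_cast Nat.card_pos
  rw [hses] at hmul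
  have key := congrArg (fun n : ℕ => (n : ℚ)) hmul
  push_cast at key
  field_simp
  linear_combination key
end

section
/- Let 𝒜 be a hereditary abelian 𝔽_q-linear category with finite Hom and Ext¹ spaces. For any objects A, B of 𝒜, in C_{ℤ₂}(𝒜) the Euler forms satisfy ⟨[C_A], [K_B]⟩ = ⟨A, B⟩_𝒜 and ⟨[K_B], [C_A]⟩ = 0, where C_A = (0 ⇄ A) is the stalk complex with A in degree 1 and zero differentials, and K_B = (B ⇄ B) with d⁰ = id, d¹ = 0 is the acyclic complex associated to B, and ⟨[M],[N]⟩ = dim Hom_{C_{ℤ₂}(𝒜)}(M,N) − dim Ext¹_{C_{ℤ₂}(𝒜)}(M,N). -/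
open CategoryTheory Limits ZeroObject

universe v u

/-- The category `C_{ℤ₂}(𝒜)` of `ℤ₂`-graded complexes over `𝒜`. -/
abbrev C2 (A : Type u) [Category.{v} A] [Abelian A] :=
  HomologicalComplex A (ComplexShape.up' (1 : ZMod 2))

variable {A : Type u} [Category.{v} A] [Abelian A]

/-- The stalk complex `C_X = (0 ⇄ X)` with `X` in degree `1` and zero differentials. -/
noncomputable def stalkC (X : A) : C2 A where
  X i := if i = 1 then X else 0
  d _ _ := 0
  shape := by intros; rfl
  d_comp_d' := by intros; simp

/-- The acyclic complex `K_X = (X ⇄ X)` with `d⁰ = id`, `d¹ = 0`. -/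
noncomputable def acyclicK (X : A) : C2 A where
  X _ := X
  d i j := if i = 0 ∧ j = 1 then 𝟙 X else 0
  shape := by
    intro i j h
    try dsimp
    rw [if_neg]
    rintro ⟨rfl, rfl⟩
    exact h (by decide)
  d_comp_d' := by
    intro i j k hij hjk
    try dsimp
    by_cases h1 : i = 0 ∧ j = 1
    · rw [if_pos h1, if_neg (by rintro ⟨rfl, -⟩; exact absurd h1.2 (by decide)), comp_zero]
    · rw [if_neg h1, zero_comp]

/-- The Euler form `⟨M,N⟩ = dim Hom(M,N) − dim Ext¹(M,N)` in `C_{ℤ₂}(𝒜)`,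
dimensions taken over `Fq`. -/
noncomputable def eulerC2 (Fq : Type*) [Field Fq] [Linear Fq A]
    [EnoughProjectives (C2 A)] (M N : C2 A) : ℤ :=
  (Module.finrank Fq (M ⟶ N) : ℤ) -
    (Module.finrank Fq (((Ext Fq (C2 A) 1).obj (Opposite.op M)).obj N) : ℤ)

/-- The Euler form `⟨A,B⟩ = dim Hom(A,B) − dim Ext¹(A,B)` in `𝒜`. -/
noncomputable def eulerA (Fq : Type*) [Field Fq] [Linear Fq A]
    [EnoughProjectives A] (X Y : A) : ℤ :=
  (Module.finrank Fq (X ⟶ Y) : ℤ) -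
    (Module.finrank Fq (((Ext Fq A 1).obj (Opposite.op X)).obj Y) : ℤ)


section Aux

variable {A : Type u} [Category.{v} A] [Abelian A]

lemma zmod2_cases (i : ZMod 2) : i = 0 ∨ i = 1 := by revert i; decide

@[simp] lemma acyclicK_d01 (Y : A) : (acyclicK Y).d 0 1 = 𝟙 Y := by
  dsimp [acyclicK]

@[simp] lemma acyclicK_d10 (Y : A) : (acyclicK Y).d 1 0 = 0 := by
  dsimp [acyclicK]
  rfl

lemma stalkC_X1 (X : A) : (stalkC X).X 1 = X := by
  dsimp [stalkC]

lemma stalkC_X0 (X : A) : (stalkC X).X 0 = 0 := by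
  dsimp [stalkC]

lemma isZero_stalkC_X0 (X : A) : IsZero ((stalkC X).X 0) := by
  rw [stalkC_X0]; exact isZero_zero A

@[simp] lemma stalkC_d (X : A) (i j : ZMod 2) : (stalkC X).d i j = 0 := rfl

/-- Components for `mkHom`. -/
def mkF {M N : C2 A} (f0 : M.X 0 ⟶ N.X 0) (f1 : M.X 1 ⟶ N.X 1) (i : ZMod 2) :
    M.X i ⟶ N.X i :=
  if h : i = 0 then
    eqToHom (congrArg M.X h) ≫ f0 ≫ eqToHom (congrArg N.X h).symm
  else
    eqToHom (congrArg M.X ((zmod2_cases i).resolve_left h)) ≫ f1 ≫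
      eqToHom (congrArg N.X ((zmod2_cases i).resolve_left h)).symm

@[simp] lemma mkF_0 {M N : C2 A} (f0 : M.X 0 ⟶ N.X 0) (f1 : M.X 1 ⟶ N.X 1) :
    mkF f0 f1 0 = f0 := by
  rw [mkF, dif_pos rfl]; simp

@[simp] lemma mkF_1 {M N : C2 A} (f0 : M.X 0 ⟶ N.X 0) (f1 : M.X 1 ⟶ N.X 1) :
    mkF f0 f1 1 = f1 := by
  rw [mkF, dif_neg (by decide : ¬ (1 : ZMod 2) = 0)]; simp

/-- Construct a morphism in `C2 A` from its two components. -/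
def mkHom {M N : C2 A} (f0 : M.X 0 ⟶ N.X 0) (f1 : M.X 1 ⟶ N.X 1)
    (h01 : f0 ≫ N.d 0 1 = M.d 0 1 ≫ f1)
    (h10 : f1 ≫ N.d 1 0 = M.d 1 0 ≫ f0) : M ⟶ N where
  f := mkF f0 f1
  comm' := by
    rintro i j (hij : i + 1 = j)
    rcases zmod2_cases i with rfl | rfl
    · obtain rfl : j = 1 := by rw [← hij]; decide
      rw [mkF_0, mkF_1]; exact h01
    · obtain rfl : j = 0 := by rw [← hij]; decide
      rw [mkF_0, mkF_1]; exact h10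

@[simp] lemma mkHom_f0 {M N : C2 A} (f0 : M.X 0 ⟶ N.X 0) (f1 : M.X 1 ⟶ N.X 1)
    (h01 : f0 ≫ N.d 0 1 = M.d 0 1 ≫ f1) (h10 : f1 ≫ N.d 1 0 = M.d 1 0 ≫ f0) :
    (mkHom f0 f1 h01 h10).f 0 = f0 := mkF_0 f0 f1

@[simp] lemma mkHom_f1 {M N : C2 A} (f0 : M.X 0 ⟶ N.X 0) (f1 : M.X 1 ⟶ N.X 1)
    (h01 : f0 ≫ N.d 0 1 = M.d 0 1 ≫ f1) (h10 : f1 ≫ N.d 1 0 = M.d 1 0 ≫ f0) :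
    (mkHom f0 f1 h01 h10).f 1 = f1 := mkF_1 f0 f1

lemma c2_hom_ext {M N : C2 A} (f g : M ⟶ N) (h0 : f.f 0 = g.f 0) (h1 : f.f 1 = g.f 1) :
    f = g := by
  apply HomologicalComplex.hom_ext
  intro i
  rcases zmod2_cases i with rfl | rfl <;> assumption

/-- The functor `K : A ⥤ C2 A`, `Y ↦ K_Y`. -/
@[simps]
noncomputable def KFunctor : A ⥤ C2 A where
  obj Y := acyclicK Y
  map {Y Z} f :=
    { f := fun _ => f
      comm' := by
        rintro i j -
        dsimp [acyclicK]
        split_ifs <;> simp }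
  map_id Y := by apply c2_hom_ext <;> rfl
  map_comp f g := by apply c2_hom_ext <;> rfl

/-- `K ⊣ ev⁰`. -/
noncomputable def adjKev0 :
    (KFunctor (A := A)) ⊣ HomologicalComplex.eval A (ComplexShape.up' (1 : ZMod 2)) 0 :=
  Adjunction.mkOfHomEquiv
    { homEquiv := fun Z M =>
        { toFun := fun f => f.f 0
          invFun := fun g => mkHom g (g ≫ M.d 0 1)
            (by simp [KFunctor, acyclicK]; rfl) (by simp [KFunctor, acyclicK]; exact (Category.assoc g _ _).trans ((congrArg (g ≫ ·) (M.d_comp_d 0 1 0)).trans (comp_zero.trans zero_comp.symm)))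
          left_inv := fun f => by
            apply c2_hom_ext
            · simp
            · have h := f.comm 0 1
              dsimp [KFunctor, acyclicK] at h
              rw [Category.id_comp] at h
              exact (mkHom_f1 _ _ _ _).trans h
          right_inv := fun g => by exact mkHom_f0 _ _ _ _ }
      homEquiv_naturality_left_symm := fun f g => by
        apply c2_hom_ext
        · refine (mkHom_f0 (M := KFunctor.obj _) (f ≫ g) ((f ≫ g) ≫ _) ?_ ?_).trans ?_
          · exact (Category.id_comp _).symm
          · exact (Category.assoc _ _ _).trans ((congrArg ((f ≫ g) ≫ ·) (HomologicalComplex.d_comp_d _ 0 1 0)).trans (comp_zero.trans zero_comp.symm))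
          refine congrArg (f ≫ ·) (mkHom_f0 (M := KFunctor.obj _) g (g ≫ _) ?_ ?_).symm
          · exact (Category.id_comp _).symm
          · exact (Category.assoc _ _ _).trans ((congrArg (g ≫ ·) (HomologicalComplex.d_comp_d _ 0 1 0)).trans (comp_zero.trans zero_comp.symm))
        · refine (mkHom_f1 (M := KFunctor.obj _) (f ≫ g) ((f ≫ g) ≫ _) ?_ ?_).trans ?_
          · exact (Category.id_comp _).symm
          · exact (Category.assoc _ _ _).trans ((congrArg ((f ≫ g) ≫ ·) (HomologicalComplex.d_comp_d _ 0 1 0)).trans (comp_zero.trans zero_comp.symm))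
          refine (Category.assoc _ _ _).trans ?_
          refine congrArg (f ≫ ·) (mkHom_f1 (M := KFunctor.obj _) g (g ≫ _) ?_ ?_).symm
          · exact (Category.id_comp _).symm
          · exact (Category.assoc _ _ _).trans ((congrArg (g ≫ ·) (HomologicalComplex.d_comp_d _ 0 1 0)).trans (comp_zero.trans zero_comp.symm))
      homEquiv_naturality_right := fun f g => by exact HomologicalComplex.comp_f f g 0 }

/-- `ev¹ ⊣ K`. -/
noncomputable def adjEv1K :
    HomologicalComplex.eval A (ComplexShape.up' (1 : ZMod 2)) 1 ⊣ (KFunctor (A := A)) :=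
  Adjunction.mkOfHomEquiv
    { homEquiv := fun M Y =>
        { toFun := fun g => mkHom (M.d 0 1 ≫ g) g
            (by simp [KFunctor, acyclicK]) (by simp [KFunctor, acyclicK]; exact comp_zero.trans ((Category.assoc _ _ _).symm.trans ((congrArg (· ≫ g) (M.d_comp_d 1 0 1)).trans zero_comp)).symm)
          invFun := fun f => f.f 1
          left_inv := fun g => by exact mkHom_f1 _ _ _ _
          right_inv := fun f => by
            apply c2_hom_ext
            · have h := f.comm 0 1
              dsimp [KFunctor, acyclicK] at h
              exact (mkHom_f0 _ _ _ _).trans (h.symm.trans (Category.comp_id _))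
            · exact mkHom_f1 _ _ _ _ }
      homEquiv_naturality_left_symm := fun f g => by exact HomologicalComplex.comp_f f g 1
      homEquiv_naturality_right := fun f g => by
        apply c2_hom_ext
        · refine (mkHom_f0 (N := KFunctor.obj _) (_ ≫ f ≫ g) (f ≫ g) ?_ ?_).trans ?_
          · exact Category.comp_id _
          · exact comp_zero.trans ((Category.assoc _ _ _).symm.trans ((congrArg (· ≫ (f ≫ g)) (HomologicalComplex.d_comp_d _ 1 0 1)).trans zero_comp)).symm
          refine (Category.assoc _ _ _).symm.trans ?_
          refine congrArg (· ≫ g) (mkHom_f0 (N := KFunctor.obj _) (_ ≫ f) f ?_ ?_).symm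
          · exact Category.comp_id _
          · exact comp_zero.trans ((Category.assoc _ _ _).symm.trans ((congrArg (· ≫ f) (HomologicalComplex.d_comp_d _ 1 0 1)).trans zero_comp)).symm
        · refine (mkHom_f1 (N := KFunctor.obj _) (_ ≫ f ≫ g) (f ≫ g) ?_ ?_).trans ?_
          · exact Category.comp_id _
          · exact comp_zero.trans ((Category.assoc _ _ _).symm.trans ((congrArg (· ≫ (f ≫ g)) (HomologicalComplex.d_comp_d _ 1 0 1)).trans zero_comp)).symm
          refine congrArg (· ≫ g) (mkHom_f1 (N := KFunctor.obj _) (_ ≫ f) f ?_ ?_).symm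
          · exact Category.comp_id _
          · exact comp_zero.trans ((Category.assoc _ _ _).symm.trans ((congrArg (· ≫ f) (HomologicalComplex.d_comp_d _ 1 0 1)).trans zero_comp)).symm }

/-- Transport a projective resolution along an exact functor preserving projectives. -/
noncomputable def mapRes {C : Type*} {D : Type*} [Category C] [Category D]
    [Abelian C] [Abelian D] {X : C} (P : ProjectiveResolution X) (F : C ⥤ D)
    [F.Additive] [F.PreservesHomology]
    (hp : ∀ n, Projective (F.obj (P.complex.X n))) {W : D} (e : F.obj X ≅ W) :
    ProjectiveResolution W where
  complex := (F.mapHomologicalComplex _).obj P.complex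
  projective := hp
  π := (F.mapHomologicalComplex _).map P.π ≫
      (HomologicalComplex.singleMapHomologicalComplex F (ComplexShape.down ℕ) 0).hom.app X ≫
      (HomologicalComplex.single D (ComplexShape.down ℕ) 0).map e.hom
  quasiIso := by
    have h1 : QuasiIso ((F.mapHomologicalComplex _).map P.π) :=
      HomologicalComplex.quasiIso_map_of_preservesHomology _ _
    have h2 : IsIso ((HomologicalComplex.singleMapHomologicalComplex F
        (ComplexShape.down ℕ) 0).hom.app X ≫
        (HomologicalComplex.single D (ComplexShape.down ℕ) 0).map e.hom) := by
      infer_instance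
    infer_instance

variable (Fq : Type*) [Field Fq] [Linear Fq A]

/-- `Hom(M, K_Y) ≃ₗ Hom(M¹, Y)`. -/
noncomputable def homKLinEquiv (M : C2 A) (Y : A) : (M ⟶ acyclicK Y) ≃ₗ[Fq] (M.X 1 ⟶ Y) where
  toFun f := f.f 1
  invFun g := mkHom (M.d 0 1 ≫ g) g (by simp [acyclicK]) (by simp [acyclicK])
  map_add' f g := by simp [HomologicalComplex.add_f_apply]; rfl
  map_smul' r f := by simp [HomologicalComplex.smul_f_apply]; rfl
  left_inv f := by
    apply c2_hom_ext
    · have h := f.comm 0 1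
      dsimp [acyclicK] at h
      exact (mkHom_f0 _ _ _ _).trans (h.symm.trans (Category.comp_id _))
    · exact mkHom_f1 _ _ _ _
  right_inv g := by exact mkHom_f1 _ _ _ _

/-- Precomposition with an isomorphism as a linear equivalence. -/
noncomputable def precompLinEquiv {X X' : A} (e : X ≅ X') (Y : A) : (X' ⟶ Y) ≃ₗ[Fq] (X ⟶ Y) where
  toFun g := e.hom ≫ g
  invFun g := e.inv ≫ g
  map_add' := by simp
  map_smul' := by simp
  left_inv g := by simp
  right_inv g := by simp

lemma subsingleton_K_to_stalk (Z X : A) : Subsingleton (acyclicK Z ⟶ stalkC X) := by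
  have key : ∀ h : acyclicK Z ⟶ stalkC X, h = 0 := by
    intro h
    apply c2_hom_ext
    · exact (isZero_stalkC_X0 X).eq_of_tgt _ _
    · have hc := h.comm 0 1
      dsimp [acyclicK] at hc
      simp only [stalkC_d, comp_zero, Category.id_comp] at hc
      simp [← hc]
      rfl
  exact ⟨fun f g => by rw [key f, key g]⟩

lemma finrank_of_isZero {M : ModuleCat Fq} (h : IsZero M) : Module.finrank Fq M = 0 := by
  have e := h.iso (ModuleCat.isZero_of_subsingleton (ModuleCat.of Fq PUnit))
  rw [e.toLinearEquiv.finrank_eq]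
  exact Module.finrank_zero_of_subsingleton

end Aux

/-- For a hereditary abelian `𝔽_q`-linear category `𝒜` with finite Hom and `Ext¹` spaces:
`⟨[C_A], [K_B]⟩ = ⟨A,B⟩_𝒜` and `⟨[K_B], [C_A]⟩ = 0`. -/
theorem stmt14 (Fq : Type*) [Field Fq] [Finite Fq] [Linear Fq A]
    [EnoughProjectives A] [EnoughProjectives (C2 A)]
    (hfin : ∀ X Y : A, Finite (X ⟶ Y))
    (hered : ∀ X Y : A, Subsingleton (((Ext Fq A 2).obj (Opposite.op X)).obj Y))
    (X Y : A) :
    eulerC2 Fq (stalkC X) (acyclicK Y) = eulerA Fq X Y ∧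
    eulerC2 Fq (acyclicK Y) (stalkC X) = 0 := by
  classical
  -- instances coming from the two adjunctions
  haveI hKcolim : PreservesColimitsOfSize.{0, 0} (KFunctor (A := A)) :=
    adjKev0.leftAdjoint_preservesColimits
  haveI hKlim : PreservesLimitsOfSize.{0, 0} (KFunctor (A := A)) :=
    adjEv1K.rightAdjoint_preservesLimits
  haveI : (KFunctor (A := A)).PreservesHomology := {}
  haveI : (KFunctor (A := A)).Additive :=
    { map_add := by intro X Y f g; apply c2_hom_ext <;> (simp; rfl) }
  set ev1 := HomologicalComplex.eval A (ComplexShape.up' (1 : ZMod 2)) 1 with hev1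
  -- Part 1 : a projective resolution of X obtained from one of `stalkC X`
  let P : ProjectiveResolution (stalkC X) := projectiveResolution _
  have hp : ∀ n, Projective (ev1.obj (P.complex.X n)) :=
    fun n => adjEv1K.map_projective _ (P.projective n)
  let Q : ProjectiveResolution X := mapRes P ev1 hp (eqToIso (stalkC_X1 X))
  -- comparison of the Hom complexes
  let isoCplx : P.complex.linearYonedaObj Fq (acyclicK Y) ≅ Q.complex.linearYonedaObj Fq Y :=
    HomologicalComplex.Hom.isoOfComponents
      (fun n => (homKLinEquiv Fq (P.complex.X n) Y).toModuleIso)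
      (by
        intro i j _
        ext f
        simp [ChainComplex.linearYonedaObj_d, homKLinEquiv]
        rfl)
  have ext1 : Module.finrank Fq (((Ext Fq (C2 A) 1).obj (Opposite.op (stalkC X))).obj
      (acyclicK Y)) = Module.finrank Fq (((Ext Fq A 1).obj (Opposite.op X)).obj Y) := by
    have e : (((Ext Fq (C2 A) 1).obj (Opposite.op (stalkC X))).obj (acyclicK Y)) ≅
        (((Ext Fq A 1).obj (Opposite.op X)).obj Y) :=
      P.isoExt 1 (acyclicK Y) ≪≫
        (HomologicalComplex.homologyFunctor (ModuleCat Fq) _ 1).mapIso isoCplx ≪≫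
        (Q.isoExt 1 Y).symm
    exact e.toLinearEquiv.finrank_eq
  have hom1 : Module.finrank Fq (stalkC X ⟶ acyclicK Y) =
      Module.finrank Fq (X ⟶ Y) := by
    refine ((homKLinEquiv Fq (stalkC X) Y).trans
      (precompLinEquiv Fq (eqToIso (stalkC_X1 X)).symm Y)).finrank_eq
  -- Part 2 : a projective resolution of `acyclicK Y` obtained from one of `Y`
  let P' : ProjectiveResolution Y := projectiveResolution _
  have hp' : ∀ n, Projective ((KFunctor (A := A)).obj (P'.complex.X n)) :=
    fun n => adjKev0.map_projective _ (P'.projective n)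
  let R : ProjectiveResolution (acyclicK Y) :=
    mapRes P' KFunctor hp' (Iso.refl (acyclicK Y))
  have hsub : ∀ n : ℕ, Subsingleton ((R.complex.linearYonedaObj Fq (stalkC X)).X n) :=
    fun n => subsingleton_K_to_stalk (P'.complex.X n) X
  have ext2 : Module.finrank Fq (((Ext Fq (C2 A) 1).obj (Opposite.op (acyclicK Y))).obj
      (stalkC X)) = 0 := by
    apply finrank_of_isZero
    refine IsZero.of_iso ?_ (R.isoExt 1 (stalkC X))
    rw [← HomologicalComplex.exactAt_iff_isZero_homology,
      HomologicalComplex.exactAt_iff]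
    have hz : IsZero ((R.complex.linearYonedaObj Fq (stalkC X)).X 1) :=
      @ModuleCat.isZero_of_subsingleton _ _ _ (hsub 1)
    exact ShortComplex.exact_of_isZero_X₂ _ hz
  have hom2 : Module.finrank Fq (acyclicK Y ⟶ stalkC X) = 0 := by
    haveI := subsingleton_K_to_stalk Y X
    exact Module.finrank_zero_of_subsingleton
  constructor
  · rw [eulerC2, eulerA, ext1, hom1]
  · rw [eulerC2, ext2, hom2]
    simp
end
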